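/- Let F be a 3-CNF formula with m clauses over a variable type V, and let F′ be its GJS transformation, a 2-CNF formula over V together with fresh variables y₁,…,y_m. Then: (i) for every assignment σ : V → Bool and every y : Fin m → Bool, sat(F′, (σ,y)) ≤ 6m + sat(F, σ); and (ii) maxsat(F′) = 6m + maxsat(F). -/

import Mathlib

/-- A literal: a variable together with a polarity. -/
def Lit (V : Type*) := V × Bool

/-- A literal evaluates to `σ v` if positive and `¬ σ v` if negative. -/
def litEval {V : Type*} (σ : V → Bool) (l : Lit V) : Bool :=
  if l.2 then σ l.1 else !(σ l.1)

/-- A 3-clause: a triple of literals. -/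
def Clause3 (V : Type*) := Lit V × Lit V × Lit V

/-- A 3-clause is satisfied if at least one of its literals evaluates to true. -/
def c3Eval {V : Type*} (σ : V → Bool) (c : Clause3 V) : Bool :=
  litEval σ c.1 || litEval σ c.2.1 || litEval σ c.2.2

/-- A 2-clause: a pair of literals (a unit clause is represented by a repeated literal). -/
def Clause2 (V : Type*) := Lit V × Lit V

def c2Eval {V : Type*} (σ : V → Bool) (c : Clause2 V) : Bool :=
  litEval σ c.1 || litEval σ c.2

/-- Number of clauses of the 3-CNF formula `F` satisfied by `σ`. -/
def sat3 {V : Type*} (F : List (Clause3 V)) (σ : V → Bool) : ℕ :=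
  (F.filter (fun c => c3Eval σ c)).length

/-- Number of clauses of the 2-CNF formula `F` satisfied by `σ`. -/
def sat2 {V : Type*} (F : List (Clause2 V)) (σ : V → Bool) : ℕ :=
  (F.filter (fun c => c2Eval σ c)).length

/-- The maximum number of simultaneously satisfiable clauses of a 3-CNF formula. -/
def maxsat3 {V : Type*} [Fintype V] [DecidableEq V] (F : List (Clause3 V)) : ℕ :=
  Finset.univ.sup (fun σ : V → Bool => sat3 F σ)

/-- The maximum number of simultaneously satisfiable clauses of a 2-CNF formula. -/
def maxsat2 {V : Type*} [Fintype V] [DecidableEq V] (F : List (Clause2 V)) : ℕ :=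
  Finset.univ.sup (fun σ : V → Bool => sat2 F σ)

def negLit {V : Type*} (l : Lit V) : Lit V := (l.1, !l.2)

/-- The ten GJS gadget 2-clauses for the `i`-th 3-clause `c = (ℓ₁ ∨ ℓ₂ ∨ ℓ₃)`:
`(ℓ₁), (ℓ₂), (ℓ₃), (yᵢ), (¬ℓ₁∨¬ℓ₂), (¬ℓ₂∨¬ℓ₃), (¬ℓ₁∨¬ℓ₃), (ℓ₁∨¬yᵢ), (ℓ₂∨¬yᵢ), (ℓ₃∨¬yᵢ)`. -/
def gjsGadget {V : Type*} {m : ℕ} (i : Fin m) (c : Clause3 V) :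
    List (Clause2 (V ⊕ Fin m)) :=
  let l₁ : Lit (V ⊕ Fin m) := (Sum.inl c.1.1, c.1.2)
  let l₂ : Lit (V ⊕ Fin m) := (Sum.inl c.2.1.1, c.2.1.2)
  let l₃ : Lit (V ⊕ Fin m) := (Sum.inl c.2.2.1, c.2.2.2)
  let y : Lit (V ⊕ Fin m) := (Sum.inr i, true)
  [(l₁, l₁), (l₂, l₂), (l₃, l₃), (y, y),
   (negLit l₁, negLit l₂), (negLit l₂, negLit l₃), (negLit l₁, negLit l₃),
   (l₁, negLit y), (l₂, negLit y), (l₃, negLit y)]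

/-- The GJS transformation of a 3-CNF formula: replace each clause by its ten gadget
2-clauses, over the original variables plus one fresh variable per clause. -/
def gjs {V : Type*} (F : List (Clause3 V)) : List (Clause2 (V ⊕ Fin F.length)) :=
  (List.ofFn (fun i : Fin F.length => gjsGadget i (F.get i))).flatten


section GJSAux

variable {V : Type*}

def b2n (b : Bool) : ℕ := if b then 1 else 0

def cnt (a b c t : Bool) : ℕ :=
  b2n a + b2n b + b2n c + b2n t + b2n (!a || !b) + b2n (!b || !c) + b2n (!a || !c) +
  b2n (a || !t) + b2n (b || !t) + b2n (c || !t)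

lemma cnt_le (a b c t : Bool) : cnt a b c t ≤ 6 + b2n (a || b || c) := by
  cases a <;> cases b <;> cases c <;> cases t <;> decide

lemma cnt_eq (a b c : Bool) : cnt a b c (a && b && c) = 6 + b2n (a || b || c) := by
  cases a <;> cases b <;> cases c <;> decide

lemma litEval_negLit (σ : V → Bool) (l : Lit V) : litEval σ (negLit l) = !(litEval σ l) := by
  obtain ⟨v, p⟩ := l; cases p <;> simp [litEval, negLit]

lemma sat2_nil (σ : V → Bool) : sat2 ([] : List (Clause2 V)) σ = 0 := rfl

lemma sat2_cons (c : Clause2 V) (L : List (Clause2 V)) (σ : V → Bool) :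
    sat2 (c :: L) σ = b2n (c2Eval σ c) + sat2 L σ := by
  simp only [sat2, List.filter_cons, b2n]
  split <;> simp [Nat.add_comm]

lemma sat2_flatten (L : List (List (Clause2 V))) (σ : V → Bool) :
    sat2 L.flatten σ = (L.map (fun l => sat2 l σ)).sum := by
  induction L with
  | nil => rfl
  | cons a l ih =>
    simp only [List.flatten_cons, List.map_cons, List.sum_cons, ← ih]
    simp [sat2, List.filter_append]

lemma length_filter_eq_sum {α : Type*} (L : List α) (p : α → Bool) :
    (L.filter p).length = ∑ i : Fin L.length, b2n (p (L.get i)) := by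
  induction L with
  | nil => simp
  | cons a l ih =>
    simp only [List.length_cons]
    rw [Fin.sum_univ_succ]
    simp only [List.filter_cons, List.length_cons, List.get, b2n]
    split <;> simp [ih, b2n, Nat.add_comm, *]

lemma sat3_eq_sum (F : List (Clause3 V)) (σ : V → Bool) :
    sat3 F σ = ∑ i : Fin F.length, b2n (c3Eval σ (F.get i)) :=
  length_filter_eq_sum F _

lemma sat2_gadget {m : ℕ} (σ : V → Bool) (y : Fin m → Bool) (i : Fin m) (cl : Clause3 V) :
    sat2 (gjsGadget i cl) (Sum.elim σ y) =
      cnt (litEval σ cl.1) (litEval σ cl.2.1) (litEval σ cl.2.2) (y i) := by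
  obtain ⟨⟨v₁, p₁⟩, ⟨v₂, p₂⟩, ⟨v₃, p₃⟩⟩ := cl
  simp only [gjsGadget, sat2_cons, sat2_nil, c2Eval, litEval_negLit, cnt]
  have h₁ : litEval (Sum.elim σ y) (Sum.inl v₁, p₁) = litEval σ (v₁, p₁) := rfl
  have h₂ : litEval (Sum.elim σ y) (Sum.inl v₂, p₂) = litEval σ (v₂, p₂) := rfl
  have h₃ : litEval (Sum.elim σ y) (Sum.inl v₃, p₃) = litEval σ (v₃, p₃) := rfl
  have hy : litEval (Sum.elim σ y) (Sum.inr i, true) = y i := rfl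
  simp only [sat2, List.filter, c2Eval, litEval, negLit, Sum.elim_inl, Sum.elim_inr]
  cases p₁ <;> cases p₂ <;> cases p₃ <;> cases σ v₁ <;> cases σ v₂ <;> cases σ v₃ <;>
    cases y i <;> simp [b2n] <;> rfl

lemma sat2_gjs (F : List (Clause3 V)) (σ : V → Bool) (y : Fin F.length → Bool) :
    sat2 (gjs F) (Sum.elim σ y) =
      ∑ i : Fin F.length,
        cnt (litEval σ (F.get i).1) (litEval σ (F.get i).2.1) (litEval σ (F.get i).2.2) (y i) := by
  rw [gjs, sat2_flatten, List.map_ofFn, List.sum_ofFn]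
  exact Finset.sum_congr rfl fun i _ => sat2_gadget σ y i (F.get i)

lemma c3_eq_or (σ : V → Bool) (c : Clause3 V) :
    c3Eval σ c = (litEval σ c.1 || litEval σ c.2.1 || litEval σ c.2.2) := rfl

end GJSAux

theorem gjs_sat_bounds {V : Type*} [Fintype V] [DecidableEq V]
    (F : List (Clause3 V)) :
    (∀ (σ : V → Bool) (y : Fin F.length → Bool),
        sat2 (gjs F) (Sum.elim σ y) ≤ 6 * F.length + sat3 F σ) ∧
    maxsat2 (gjs F) = 6 * F.length + maxsat3 F := by
  have key : ∀ (σ : V → Bool) (y : Fin F.length → Bool),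
      sat2 (gjs F) (Sum.elim σ y) ≤ 6 * F.length + sat3 F σ := by
    intro σ y
    rw [sat2_gjs, sat3_eq_sum]
    calc (∑ i : Fin F.length,
            cnt (litEval σ (F.get i).1) (litEval σ (F.get i).2.1) (litEval σ (F.get i).2.2) (y i))
        ≤ ∑ i : Fin F.length, (6 + b2n (c3Eval σ (F.get i))) := by
          refine Finset.sum_le_sum fun i _ => ?_
          rw [c3_eq_or]
          exact cnt_le _ _ _ _
      _ = 6 * F.length + ∑ i : Fin F.length, b2n (c3Eval σ (F.get i)) := by
          rw [Finset.sum_add_distrib, Finset.sum_const, Finset.card_univ, Fintype.card_fin,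
            smul_eq_mul, Nat.mul_comm]
  refine ⟨key, le_antisymm ?_ ?_⟩
  · apply Finset.sup_le
    intro τ _
    have hτ : τ = Sum.elim (fun v => τ (Sum.inl v)) (fun i => τ (Sum.inr i)) := by
      funext x; cases x <;> rfl
    rw [hτ]
    refine (key _ _).trans ?_
    have : sat3 F (fun v => τ (Sum.inl v)) ≤ maxsat3 F :=
      Finset.le_sup (Finset.mem_univ _)
    omega
  · obtain ⟨σ, -, hσ⟩ := Finset.exists_mem_eq_sup (Finset.univ : Finset (V → Bool))
      Finset.univ_nonempty (fun σ => sat3 F σ)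
    rw [maxsat3, hσ]
    set y : Fin F.length → Bool := fun i =>
      litEval σ (F.get i).1 && litEval σ (F.get i).2.1 && litEval σ (F.get i).2.2 with hy
    have heq : sat2 (gjs F) (Sum.elim σ y) = 6 * F.length + sat3 F σ := by
      rw [sat2_gjs, sat3_eq_sum]
      have : ∀ i ∈ (Finset.univ : Finset (Fin F.length)),
          cnt (litEval σ (F.get i).1) (litEval σ (F.get i).2.1) (litEval σ (F.get i).2.2) (y i)
          = 6 + b2n (c3Eval σ (F.get i)) := by
        intro i _
        rw [hy, c3_eq_or]
        exact cnt_eq _ _ _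
      rw [Finset.sum_congr rfl this, Finset.sum_add_distrib, Finset.sum_const, Finset.card_univ,
        Fintype.card_fin, smul_eq_mul, Nat.mul_comm]
    rw [← heq]
    exact Finset.le_sup (Finset.mem_univ _)
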